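/- For 5 ≤ d ≤ 9, the function φ₁(y) = y²/(b + a y²) with a = √(d−2)/(2√2) and b = (6d − 12 − (d+2)√(2d−4))/2 satisfies the Yang–Mills shrinker ODE φ'' + ((d−3)/y − y/2) φ' − (d−2)/y² · φ(φ−1)(φ−2) = 0 on (0,∞). -/

import Mathlib

open Real

/-- The explicit stable Yang–Mills shrinker `φ₁(y) = y²/(b + a y²)` with
`a = √(d−2)/(2√2)` and `b = (6d − 12 − (d+2)√(2d−4))/2`. -/
noncomputable def ymShrinker (d : ℕ) (y : ℝ) : ℝ :=
  y ^ 2 /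
    ((6 * (d : ℝ) - 12 - ((d : ℝ) + 2) * Real.sqrt (2 * (d : ℝ) - 4)) / 2 +
      Real.sqrt ((d : ℝ) - 2) / (2 * Real.sqrt 2) * y ^ 2)

lemma ymShrinker_aux (a b e y : ℝ) (ha : 0 < a) (hb : 0 < b) (hy : 0 < y)
    (he : e = 8 * a ^ 2 + 2) (hbe : b = 24 * a ^ 2 - 16 * a ^ 3 - 8 * a) :
    deriv (deriv (fun z : ℝ => z ^ 2 / (b + a * z ^ 2))) y
      + ((e - 3) / y - y / 2) * deriv (fun z : ℝ => z ^ 2 / (b + a * z ^ 2)) y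
      - (e - 2) / y ^ 2 *
          (y ^ 2 / (b + a * y ^ 2) * (y ^ 2 / (b + a * y ^ 2) - 1) *
            (y ^ 2 / (b + a * y ^ 2) - 2)) = 0 := by
  have hDne : ∀ z : ℝ, b + a * z ^ 2 ≠ 0 := by
    intro z
    have h1 : 0 ≤ a * z ^ 2 := mul_nonneg ha.le (sq_nonneg z)
    nlinarith
  have hder1 : ∀ z : ℝ, HasDerivAt (fun w : ℝ => w ^ 2 / (b + a * w ^ 2))
      (2 * b * z / (b + a * z ^ 2) ^ 2) z := by
    intro z
    have h1 : HasDerivAt (fun w : ℝ => w ^ 2) (2 * z) z := by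
      simpa using hasDerivAt_pow 2 z
    have h2 : HasDerivAt (fun w : ℝ => b + a * w ^ 2) (a * (2 * z)) z :=
      (h1.const_mul a).const_add b
    have h3 : HasDerivAt (fun w : ℝ => w ^ 2 / (b + a * w ^ 2)) _ z := h1.div h2 (hDne z)
    convert h3 using 1
    field_simp
    ring
  have hd1 : deriv (fun w : ℝ => w ^ 2 / (b + a * w ^ 2))
      = fun z : ℝ => 2 * b * z / (b + a * z ^ 2) ^ 2 :=
    funext fun z => (hder1 z).deriv
  have hder2 : HasDerivAt (fun z : ℝ => 2 * b * z / (b + a * z ^ 2) ^ 2)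
      (2 * b * (b - 3 * a * y ^ 2) / (b + a * y ^ 2) ^ 3) y := by
    have h1 : HasDerivAt (fun z : ℝ => 2 * b * z) (2 * b) y := by
      simpa using (hasDerivAt_id y).const_mul (2 * b)
    have hsq : HasDerivAt (fun w : ℝ => w ^ 2) (2 * y) y := by
      simpa using hasDerivAt_pow 2 y
    have hinner : HasDerivAt (fun w : ℝ => b + a * w ^ 2) (a * (2 * y)) y :=
      (hsq.const_mul a).const_add b
    have h2 : HasDerivAt (fun z : ℝ => (b + a * z ^ 2) ^ 2)
        ((2 : ℕ) * (b + a * y ^ 2) ^ (2 - 1) * (a * (2 * y))) y := hinner.pow 2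
    have hne : (b + a * y ^ 2) ^ 2 ≠ 0 := pow_ne_zero _ (hDne y)
    have h3 : HasDerivAt (fun z : ℝ => 2 * b * z / (b + a * z ^ 2) ^ 2) _ y := h1.div h2 hne
    convert h3 using 1
    have hD := hDne y
    field_simp
    ring
  rw [hd1, hder2.deriv]
  have hD := hDne y
  subst he hbe
  have hy' : y ≠ 0 := ne_of_gt hy
  beta_reduce
  set D := 24 * a ^ 2 - 16 * a ^ 3 - 8 * a + a * y ^ 2 with hDdef
  field_simp
  rw [hDdef]
  ring

/-- For `5 ≤ d ≤ 9`, the explicit function `φ₁` satisfies the Yang–Mills shrinker ODE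
`φ'' + ((d−3)/y − y/2) φ' − (d−2)/y² · φ(φ−1)(φ−2) = 0` on `(0,∞)`. -/
theorem ymShrinker_solves_ODE (d : ℕ) (hd5 : 5 ≤ d) (hd9 : d ≤ 9) :
    ∀ y : ℝ, 0 < y →
      deriv (deriv (ymShrinker d)) y + (((d : ℝ) - 3) / y - y / 2) * deriv (ymShrinker d) y
        - ((d : ℝ) - 2) / y ^ 2 *
            (ymShrinker d y * (ymShrinker d y - 1) * (ymShrinker d y - 2)) = 0 := by
  intro y hy
  have hd5' : (5 : ℝ) ≤ (d : ℝ) := by exact_mod_cast hd5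
  have hd9' : (d : ℝ) ≤ 9 := by exact_mod_cast hd9
  set a : ℝ := Real.sqrt ((d : ℝ) - 2) / (2 * Real.sqrt 2) with ha_def
  set b : ℝ := (6 * (d : ℝ) - 12 - ((d : ℝ) + 2) * Real.sqrt (2 * (d : ℝ) - 4)) / 2 with hb_def
  have hfun : ymShrinker d = fun z : ℝ => z ^ 2 / (b + a * z ^ 2) := by
    funext z
    rw [ymShrinker, ha_def, hb_def]
  have hdm2 : (0 : ℝ) < (d : ℝ) - 2 := by linarith
  have hs2 : Real.sqrt ((d : ℝ) - 2) ^ 2 = (d : ℝ) - 2 := Real.sq_sqrt hdm2.le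
  have h22 : Real.sqrt 2 ^ 2 = 2 := Real.sq_sqrt (by norm_num)
  have hsqrt2pos : (0 : ℝ) < Real.sqrt 2 := Real.sqrt_pos.mpr (by norm_num)
  have ha0 : 0 < a := by
    rw [ha_def]
    exact div_pos (Real.sqrt_pos.mpr hdm2) (by positivity)
  have ha2 : a ^ 2 = ((d : ℝ) - 2) / 8 := by
    rw [ha_def, div_pow, mul_pow, hs2, h22]
    norm_num
  have he : (d : ℝ) = 8 * a ^ 2 + 2 := by rw [ha2]; ring
  have hs4a : Real.sqrt (2 * (d : ℝ) - 4) = 4 * a := by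
    have h1 : 2 * (d : ℝ) - 4 = (4 * a) ^ 2 := by nlinarith [ha2]
    rw [h1, Real.sqrt_sq (by positivity)]
  have hbe : b = 24 * a ^ 2 - 16 * a ^ 3 - 8 * a := by
    rw [hb_def, hs4a, he]; ring
  have ha2lo : (3 : ℝ) / 8 ≤ a ^ 2 := by rw [ha2]; linarith
  have ha2hi : a ^ 2 ≤ (7 : ℝ) / 8 := by rw [ha2]; linarith
  have hagt : (1 : ℝ) / 2 < a := by nlinarith
  have halt : a < 1 := by nlinarith
  have hb0 : 0 < b := by
    rw [hbe]
    nlinarith [mul_pos (mul_pos ha0 (by linarith : (0 : ℝ) < 2 * a - 1))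
      (by linarith : (0 : ℝ) < 1 - a)]
  rw [hfun]
  exact ymShrinker_aux a b ((d : ℝ)) y ha0 hb0 hy he hbe
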